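/- The function η(s,t) := θ({s,t}) − 1 derived from an extremal coefficient function θ satisfies the triangle inequality η(s,t) ≤ η(s,r) + η(r,t) for all s, t, r ∈ T. -/
import Mathlib


def CompletelyAlternating {T : Type*} [DecidableEq T] (ψ : Finset T → ℝ) : Prop :=
  ∀ (n : ℕ), 1 ≤ n → ∀ (K : Finset T) (Ks : Fin n → Finset T),
    ∑ I : Finset (Fin n), (-1 : ℝ) ^ I.card * ψ (K ∪ I.sup Ks) ≤ 0

lemma sum_fin1 (f : Finset (Fin 1) → ℝ) : ∑ I : Finset (Fin 1), f I = f ∅ + f {0} := by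
  rw [show (Finset.univ : Finset (Finset (Fin 1))) = {∅, {0}} from by decide]
  exact Finset.sum_pair (by decide)

lemma sum_fin2 (f : Finset (Fin 2) → ℝ) :
    ∑ I : Finset (Fin 2), f I = f ∅ + f {0} + f {1} + f {0,1} := by
  rw [show (Finset.univ : Finset (Finset (Fin 2))) = {∅, {0}, {1}, {0,1}} from by decide]
  rw [Finset.sum_insert (by decide), Finset.sum_insert (by decide),
    Finset.sum_insert (by decide), Finset.sum_singleton]
  ring

/-- The function `η(s,t) := θ({s,t}) − 1` derived from an extremal coefficient function `θ`
satisfies the triangle inequality `η(s,t) ≤ η(s,r) + η(r,t)` for all `s, t, r ∈ T`. -/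
theorem eta_triangle_inequality {T : Type*} [DecidableEq T]
    (θ : Finset T → ℝ) (hCA : CompletelyAlternating θ)
    (h0 : θ ∅ = 0) (h1 : ∀ t : T, θ {t} = 1)
    (s t r : T) :
    θ {s, t} - 1 ≤ (θ {s, r} - 1) + (θ {r, t} - 1) := by
  -- monotonicity: θ {s,t} ≤ θ ({s,t} ∪ {r})
  have hmono : θ {s, t} ≤ θ ({s, t} ∪ {r}) := by
    have h := hCA 1 le_rfl {s, t} (fun _ => {r})
    rw [sum_fin1] at h
    simp only [Finset.card_empty, Finset.card_singleton, pow_zero, pow_one,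
      Finset.sup_empty, Finset.bot_eq_empty, Finset.sup_singleton, Finset.union_empty,
      one_mul, neg_one_mul] at h
    linarith
  -- 2-alternation at K = {r}
  have h2 := hCA 2 (by norm_num) {r} ![{s}, {t}]
  rw [sum_fin2] at h2
  have e0 : (({0} : Finset (Fin 2)).sup ![({s} : Finset T), {t}]) = {s} := by simp
  have e1 : (({1} : Finset (Fin 2)).sup ![({s} : Finset T), {t}]) = {t} := by simp
  have e01 : (({0, 1} : Finset (Fin 2)).sup ![({s} : Finset T), {t}]) = {s} ∪ {t} := by
    rw [Finset.sup_insert, Finset.sup_singleton]; simp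
  have c01 : ({0, 1} : Finset (Fin 2)).card = 2 := by decide
  rw [e0, e1, e01, c01] at h2
  simp only [Finset.card_empty, Finset.card_singleton, pow_zero, pow_one,
    Finset.sup_empty, Finset.bot_eq_empty, Finset.union_empty, one_mul, neg_one_mul] at h2
  -- identify the finsets
  have hrs : ({r} ∪ {s} : Finset T) = {s, r} := by ext x; simp [or_comm]
  have hrt : ({r} ∪ {t} : Finset T) = {r, t} := by ext x; simp
  have hrst : ({r} ∪ ({s} ∪ {t}) : Finset T) = {s, t} ∪ {r} := by ext x; simp; tauto
  rw [hrs, hrt, hrst, h1 r, show ((-1 : ℝ)) ^ 2 = 1 from by norm_num, one_mul] at h2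
  linarith
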